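/- Let q ≥ 1 and let BF_q(n) denote the set of all bifix-free words of length n over an alphabet of size q. Then |BF_q(1)| = q, and for every n ≥ 1, |BF_q(2n+1)| = q·|BF_q(2n)| and |BF_q(2n)| = q·|BF_q(2n−1)| − |BF_q(n)|. -/

import Mathlib

/-- A binary word (as a list of Booleans, `true` = 1, `false` = 0) is a Dyck word
if it has as many 1s as 0s and every prefix has at least as many 1s as 0s. -/
def IsDyck (w : List Bool) : Prop :=
  w.count true = w.count false ∧
  ∀ p : List Bool, p <+: w → p.count false ≤ p.count true

/-- `DyckLen w n` : `w` is a Dyck word of length `n`. -/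
def DyckLen (w : List Bool) (n : ℕ) : Prop := IsDyck w ∧ w.length = n

/-- A word is bifix-free if no nonempty proper prefix of it is also a suffix of it. -/
def BifixFree {A : Type*} (w : List A) : Prop :=
  ∀ p : List A, p ≠ [] → p <+: w → p ≠ w → ¬ p <:+ w

/-- Two (distinct, same-length) words are cross-bifix-free if no nonempty proper
prefix of either one is a suffix of the other. -/
def CrossBifixFree {A : Type*} (w w' : List A) : Prop :=
  (∀ p : List A, p ≠ [] → p <+: w → p ≠ w → ¬ p <:+ w') ∧
  (∀ p : List A, p ≠ [] → p <+: w' → p ≠ w' → ¬ p <:+ w)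

/-- The set of bifix-free binary words of length `n`. -/
def BF (n : ℕ) : Set (List Bool) := {w | w.length = n ∧ BifixFree w}

/-- `CBFS₂(2m+1)` : words `1·α` where `α` is a Dyck word of length `2m`. -/
def CBFSodd (m : ℕ) : Set (List Bool) :=
  {w | ∃ α : List Bool, DyckLen α (2 * m) ∧ w = true :: α}

/-- `CBFS₂(2m+2)` for even `m > 1` : words `α·1·β·0` with `α` a Dyck word of length `2i`,
`β` a Dyck word of length `2(m-i)`, `0 ≤ i ≤ m/2`. -/
def CBFSevenE (m : ℕ) : Set (List Bool) :=
  {w | ∃ (i : ℕ) (α β : List Bool), i ≤ m / 2 ∧ DyckLen α (2 * i) ∧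
    DyckLen β (2 * (m - i)) ∧ w = α ++ true :: β ++ [false]}

/-- `CBFS₂(2m+2)` for odd `m ≥ 1` : words `α·1·β·0` with `α` a Dyck word of length `2i`,
`β` a Dyck word of length `2(m-i)`, `0 ≤ i ≤ (m+1)/2`, excluding the words
`1·α'·0·1·β'·0` with `α'`, `β'` Dyck words of length `m-1`. -/
def CBFSevenO (m : ℕ) : Set (List Bool) :=
  {w | ∃ (i : ℕ) (α β : List Bool), i ≤ (m + 1) / 2 ∧ DyckLen α (2 * i) ∧
    DyckLen β (2 * (m - i)) ∧ w = α ++ true :: β ++ [false]} \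
  {w | ∃ α' β' : List Bool, DyckLen α' (m - 1) ∧ DyckLen β' (m - 1) ∧
    w = true :: α' ++ false :: true :: β' ++ [false]}

/-- The set of bifix-free words of length `n` over an alphabet of size `q`. -/
def BFq (q n : ℕ) : Set (List (Fin q)) := {w | w.length = n ∧ BifixFree w}

section Borders
variable {A : Type*}

def Bord (w : List A) (k : ℕ) : Prop := w.take k = w.drop (w.length - k)

lemma bifix_iff_bord (w : List A) :
    BifixFree w ↔ ∀ k, 0 < k → k < w.length → ¬ Bord w k := by
  constructor
  · intro h k hk hkl hb
    refine h (w.take k) ?_ (List.take_prefix ..) ?_ ?_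
    · intro he
      have : min k w.length = 0 := by simpa using congrArg List.length he
      omega
    · intro he
      have : min k w.length = w.length := by simpa using congrArg List.length he
      omega
    · rw [Bord] at hb; rw [hb]; exact List.drop_suffix ..
  · intro h p hne hpre hpw hsuf
    have hk : p.length ≤ w.length := hpre.length_le
    have hlt : p.length < w.length := by
      rcases lt_or_eq_of_le hk with h' | h'
      · exact h'
      · exact absurd (List.prefix_iff_eq_take.mp hpre ▸ (by rw [h', List.take_length])) hpw
    refine h p.length (List.length_pos_iff.2 hne) hlt ?_
    rw [Bord, ← List.prefix_iff_eq_take.mp hpre, ← List.suffix_iff_eq_drop.mp hsuf]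

lemma bord_reduce {w : List A} {k : ℕ} (hb : Bord w k) (h1 : w.length < 2 * k)
    (h2 : k < w.length) : Bord w (2 * k - w.length) := by
  have hb' : w.take k = w.drop (w.length - k) := hb
  set L := w.length with hL
  set d := L - k with hd
  have key : w.take (k - d) = w.drop (d + d) := by
    calc w.take (k - d) = (w.take k).take (k - d) := by
          rw [List.take_take]; congr 1; omega
    _ = (w.drop d).take (k - d) := by rw [hb']
    _ = (w.take k).drop d := (List.drop_take ..).symm
    _ = (w.drop d).drop d := by rw [hb']
    _ = w.drop (d + d) := by rw [List.drop_drop]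
  have h3 : 2 * k - L = k - d := by omega
  have h4 : L - (k - d) = d + d := by omega
  rw [Bord, ← hL, h3, h4]; exact key

lemma exists_small_bord {w : List A} : ∀ k, 0 < k → k < w.length → Bord w k →
    ∃ j, 0 < j ∧ 2 * j ≤ w.length ∧ Bord w j := by
  intro k
  induction k using Nat.strong_induction_on with
  | _ k ih =>
    intro hk hkl hb
    by_cases h : 2 * k ≤ w.length
    · exact ⟨k, hk, h, hb⟩
    · push_neg at h
      exact ih (2 * k - w.length) (by omega) (by omega) (by omega) (bord_reduce hb h hkl)

lemma bifix_iff_half {w : List A} (hw : 0 < w.length) :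
    BifixFree w ↔ ∀ k, 0 < k → 2 * k ≤ w.length → ¬ Bord w k := by
  rw [bifix_iff_bord]
  constructor
  · intro h k hk h2; exact h k hk (by omega)
  · intro h k hk hkl hb
    obtain ⟨j, hj, hj2, hjb⟩ := exists_small_bord k hk hkl hb
    exact h j hj hj2 hjb

lemma bord_transfer {w w' : List A} {m k : ℕ} (hm : m ≤ w.length) (hm' : m ≤ w'.length)
    (ht : w.take m = w'.take m)
    (hdp : w.drop (w.length - m) = w'.drop (w'.length - m)) (hk : k ≤ m) :
    Bord w k ↔ Bord w' k := by
  have e1 : w.take k = (w.take m).take k := by rw [List.take_take]; congr 1; omega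
  have e2 : w.drop (w.length - k) = (w.drop (w.length - m)).drop (m - k) := by
    rw [List.drop_drop]; congr 1; omega
  have e1' : w'.take k = (w'.take m).take k := by rw [List.take_take]; congr 1; omega
  have e2' : w'.drop (w'.length - k) = (w'.drop (w'.length - m)).drop (m - k) := by
    rw [List.drop_drop]; congr 1; omega
  rw [Bord, Bord, e1, e2, e1', e2', ht, hdp]

lemma insert_take {w : List A} {n : ℕ} (a : A) (h : n ≤ w.length) :
    (w.take n ++ a :: w.drop n).take n = w.take n :=
  List.take_left' (by simp [h])

lemma insert_drop {w : List A} {n : ℕ} (a : A) (h : n ≤ w.length) :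
    (w.take n ++ a :: w.drop n).drop (n + 1) = w.drop n := by
  have he : w.take n ++ a :: w.drop n = (w.take n ++ [a]) ++ w.drop n := by simp
  rw [he, List.drop_left' (by simp [h])]

lemma insert_drop' {w : List A} {n : ℕ} (a : A) (h : n ≤ w.length) :
    (w.take n ++ a :: w.drop n).drop n = a :: w.drop n :=
  List.drop_left' (by simp [h])

lemma insert_length {w : List A} {n : ℕ} (a : A) (h : n ≤ w.length) :
    (w.take n ++ a :: w.drop n).length = w.length + 1 := by
  simp; omega

lemma insert_bord_iff {w : List A} {n k : ℕ} (a : A) (h : n ≤ w.length)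
    (h2 : n + n ≤ w.length) (hk : k ≤ n) :
    Bord (w.take n ++ a :: w.drop n) k ↔ Bord w k := by
  refine bord_transfer ?_ h ?_ ?_ hk
  · rw [insert_length a h]; omega
  · rw [insert_take a h]
  · have d1 : (w.take n ++ a :: w.drop n).drop (w.length + 1 - n)
        = ((w.take n ++ a :: w.drop n).drop (n + 1)).drop (w.length - n - n) := by
      rw [List.drop_drop]; congr 1; omega
    have d2 : w.drop (w.length - n) = (w.drop n).drop (w.length - n - n) := by
      rw [List.drop_drop]; congr 1; omega
    rw [insert_length a h, d1, d2, insert_drop a h]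
end Borders

section Part2
variable {A : Type*}

lemma insert_bifix_odd {w : List A} {n : ℕ} (a : A) (hn : 0 < n) (h : w.length = 2 * n) :
    BifixFree (w.take n ++ a :: w.drop n) ↔ BifixFree w := by
  have hnw : n ≤ w.length := by omega
  have hlen : (w.take n ++ a :: w.drop n).length = 2 * n + 1 := by
    rw [insert_length a hnw, h]
  rw [bifix_iff_half (by omega : 0 < (w.take n ++ a :: w.drop n).length),
    bifix_iff_half (by omega : 0 < w.length), hlen, h]
  constructor
  · intro h' k hk h2 hb
    exact h' k hk (by omega) ((insert_bord_iff a hnw (by omega) (by omega)).mpr hb)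
  · intro h' k hk h2 hb
    exact h' k hk (by omega) ((insert_bord_iff a hnw (by omega) (by omega)).mp hb)

lemma insert_bord_even {w : List A} {n : ℕ} (a : A) (h : w.length = 2 * n + 1) :
    (∀ k, 0 < k → k ≤ n → ¬ Bord (w.take n ++ a :: w.drop n) k) ↔ BifixFree w := by
  have hnw : n ≤ w.length := by omega
  rw [bifix_iff_half (by omega : 0 < w.length), h]
  constructor
  · intro h' k hk h2 hb
    exact h' k hk (by omega) ((insert_bord_iff a hnw (by omega) (by omega)).mpr hb)
  · intro h' k hk h2 hb
    exact h' k hk (by omega) ((insert_bord_iff a hnw (by omega) (by omega)).mp hb)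

end Part2

section Counting

lemma ncard_univ_prod {X : Type*} (q : ℕ) (S : Set X) :
    ((Set.univ : Set (Fin q)) ×ˢ S).ncard = q * S.ncard := by
  rw [← Nat.card_coe_set_eq, Nat.card_congr (Equiv.Set.prod _ _), Nat.card_prod,
    Nat.card_coe_set_eq, Nat.card_coe_set_eq, Set.ncard_univ, Nat.card_eq_fintype_card,
    Fintype.card_fin]

lemma ncard_insert_eq {q L n : ℕ} (hn : n ≤ L) {S T : Set (List (Fin q))}
    (hS : ∀ w ∈ S, w.length = L)
    (hT : ∀ w' ∈ T, w'.length = L + 1)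
    (hmem : ∀ (a : Fin q) (w : List (Fin q)), w.length = L →
        ((w.take n ++ a :: w.drop n) ∈ T ↔ w ∈ S)) :
    T.ncard = q * S.ncard := by
  classical
  set F : Fin q × List (Fin q) → List (Fin q) :=
    fun p => p.2.take n ++ p.1 :: p.2.drop n with hF
  set P : Set (Fin q × List (Fin q)) := (Set.univ : Set (Fin q)) ×ˢ S with hP
  have himg : F '' P = T := by
    ext w'
    constructor
    · rintro ⟨⟨a, w⟩, ⟨-, hw⟩, rfl⟩
      exact (hmem a w (hS w hw)).mpr hw
    · intro hw'
      have hl' : w'.length = L + 1 := hT w' hw'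
      have hnl : n < w'.length := by omega
      set w : List (Fin q) := w'.take n ++ w'.drop (n + 1) with hw
      have hwl : w.length = L := by
        simp [hw, List.length_take, List.length_drop]; omega
      have hrec : F (w'[n], w) = w' := by
        have h1 : w.take n = w'.take n := List.take_left' (by simp; omega)
        have h2 : w.drop n = w'.drop (n + 1) := List.drop_left' (by simp; omega)
        have h3 : w'.drop n = w'[n] :: w'.drop (n + 1) := List.drop_eq_getElem_cons hnl
        simp only [hF, h1, h2]
        rw [← h3, List.take_append_drop]
      refine ⟨(w'[n], w), ⟨trivial, ?_⟩, hrec⟩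
      have hFT : F (w'[n], w) ∈ T := by rw [hrec]; exact hw'
      exact (hmem w'[n] w hwl).mp hFT
  have hinj : Set.InjOn F P := by
    rintro ⟨a, w⟩ ⟨-, hw⟩ ⟨b, v⟩ ⟨-, hv⟩ heq
    have hwL := hS w hw; have hvL := hS v hv
    have hnw : n ≤ w.length := by omega
    have hnv : n ≤ v.length := by omega
    have hd : (a :: w.drop n) = (b :: v.drop n) := by
      have := congrArg (List.drop n) heq
      simpa only [hF, insert_drop' a hnw, insert_drop' b hnv] using this
    have ht : w.take n = v.take n := by
      have := congrArg (List.take n) heq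
      simpa only [hF, insert_take a hnw, insert_take b hnv] using this
    obtain ⟨rfl, hd2⟩ : a = b ∧ w.drop n = v.drop n := by
      exact ⟨by injection hd, by injection hd⟩
    have : w = v := by
      rw [← List.take_append_drop n w, ← List.take_append_drop n v, ht, hd2]
    simp [this]
  rw [← himg, Set.ncard_image_of_injOn hinj, hP, ncard_univ_prod]

end Counting

section Part3
variable {q : ℕ}

def Sset (q m : ℕ) : Set (List (Fin q)) :=
  {w | w.length = 2 * m ∧ ∀ k, 0 < k → k < m → ¬ Bord w k}

lemma BFq_finite (q n : ℕ) : (BFq q n).Finite :=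
  (List.finite_length_eq (Fin q) n).subset (fun _ hw => hw.1)

lemma bord_square {m k : ℕ} {x : List (Fin q)} (hx : x.length = m) (hk : k ≤ m) :
    Bord (x ++ x) k ↔ Bord x k := by
  have hlen : (x ++ x).length = 2 * m := by rw [List.length_append, hx]; omega
  refine bord_transfer (by omega) (by omega) ?_ ?_ hk
  · rw [List.take_left' hx, List.take_of_length_le (le_of_eq hx)]
  · have e : (x ++ x).length - m = m := by omega
    rw [e, List.drop_left' hx, hx, Nat.sub_self, List.drop_zero]

lemma square_not_bifix {m : ℕ} (hm : 0 < m) {x : List (Fin q)} (hx : x.length = m) :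
    ¬ BifixFree (x ++ x) := by
  intro h
  have hlen : (x ++ x).length = 2 * m := by rw [List.length_append, hx]; omega
  refine (bifix_iff_bord _).mp h m hm (by omega) ?_
  rw [Bord, hlen]
  have e : 2 * m - m = m := by omega
  rw [e, List.take_left' hx, List.drop_left' hx]

lemma sq_injOn {m : ℕ} : Set.InjOn (fun x : List (Fin q) => x ++ x) (BFq q m) := by
  intro x hx y hy h
  have := congrArg (List.take m) h
  simpa only [List.take_left' hx.1, List.take_left' hy.1] using this

lemma Sset_eq {m : ℕ} (hm : 0 < m) :
    Sset q m = BFq q (2 * m) ∪ (fun x : List (Fin q) => x ++ x) '' BFq q m := by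
  ext w
  constructor
  · rintro ⟨hlen, hnob⟩
    by_cases hb : Bord w m
    · right
      have hb' : w.take m = w.drop m := by
        have hb'' : w.take m = w.drop (w.length - m) := hb
        have e : w.length - m = m := by omega
        rwa [e] at hb''
      have hsplit : w = w.take m ++ w.take m := by
        nth_rewrite 1 [← List.take_append_drop m w]; rw [hb']
      have hxlen : (w.take m).length = m := by
        rw [List.length_take]; omega
      refine ⟨w.take m, ⟨hxlen, ?_⟩, hsplit.symm⟩
      rw [bifix_iff_bord]
      intro k hk hkl hbx
      have hbw : Bord (w.take m ++ w.take m) k :=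
        (bord_square hxlen (by omega)).mpr hbx
      rw [← hsplit] at hbw
      exact hnob k hk (by omega) hbw
    · left
      refine ⟨hlen, ?_⟩
      rw [bifix_iff_half (by omega)]
      intro k hk h2 hbk
      rcases Nat.lt_or_ge k m with h' | h'
      · exact hnob k hk h' hbk
      · have : k = m := by omega
        exact hb (this ▸ hbk)
  · rintro (⟨hlen, hbf⟩ | ⟨x, ⟨hxlen, hxbf⟩, rfl⟩)
    · exact ⟨hlen, fun k hk hkm hbk => (bifix_iff_bord w).mp hbf k hk (by omega) hbk⟩
    · refine ⟨by rw [List.length_append, hxlen]; omega, fun k hk hkm hbk => ?_⟩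
      exact (bifix_iff_bord x).mp hxbf k hk (by omega)
        ((bord_square hxlen (by omega)).mp hbk)

lemma Sset_disj {m : ℕ} (hm : 0 < m) :
    Disjoint (BFq q (2 * m)) ((fun x : List (Fin q) => x ++ x) '' BFq q m) := by
  rw [Set.disjoint_left]
  rintro w ⟨hlen, hbf⟩ ⟨x, ⟨hxlen, -⟩, rfl⟩
  exact square_not_bifix hm hxlen hbf

lemma bifix_one {A : Type*} {w : List A} (h : w.length = 1) : BifixFree w :=
  (bifix_iff_bord w).mpr (by intro k hk hkl; rw [h] at hkl; omega)

end Part3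



/-- `|BF_q(1)| = q`, and for `n ≥ 1`, `|BF_q(2n+1)| = q·|BF_q(2n)|` and
`|BF_q(2n)| = q·|BF_q(2n-1)| − |BF_q(n)|`. -/
theorem BFq_card_recurrence (q : ℕ) (hq : 1 ≤ q) :
    (BFq q 1).ncard = q ∧
    ∀ n : ℕ, 1 ≤ n →
      (BFq q (2 * n + 1)).ncard = q * (BFq q (2 * n)).ncard ∧
      (BFq q (2 * n)).ncard = q * (BFq q (2 * n - 1)).ncard - (BFq q n).ncard := by
  constructor
  · have he : BFq q 1 = (fun a : Fin q => [a]) '' Set.univ := by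
      ext w
      constructor
      · rintro ⟨hlen, -⟩
        match w, hlen with
        | [a], _ => exact ⟨a, trivial, rfl⟩
      · rintro ⟨a, -, rfl⟩
        exact ⟨rfl, bifix_one rfl⟩
    rw [he, Set.ncard_image_of_injective _ (fun a b h => by injection h), Set.ncard_univ,
      Nat.card_eq_fintype_card, Fintype.card_fin]
  · intro n hn
    constructor
    · refine ncard_insert_eq (n := n) (by omega) (fun w hw => hw.1)
        (fun w' hw' => hw'.1) ?_
      intro a w hw
      have hnw : n ≤ w.length := by omega
      constructor
      · rintro ⟨hl, hbf⟩
        exact ⟨hw, (insert_bifix_odd a (by omega) hw).mp hbf⟩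
      · rintro ⟨-, hbf⟩
        exact ⟨by rw [insert_length a hnw]; omega, (insert_bifix_odd a (by omega) hw).mpr hbf⟩
    · have hS1 : (Sset q n).ncard = (BFq q (2 * n)).ncard + (BFq q n).ncard := by
        rw [Sset_eq (by omega), Set.ncard_union_eq (Sset_disj (by omega))
          (BFq_finite q (2 * n)) ((BFq_finite q n).image _),
          Set.ncard_image_of_injOn sq_injOn]
      have hS2 : (Sset q n).ncard = q * (BFq q (2 * n - 1)).ncard := by
        refine ncard_insert_eq (L := 2 * n - 1) (n := n - 1) (by omega) (fun w hw => hw.1)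
          (fun w' hw' => by have := hw'.1; omega) ?_
        intro a w hw
        have h1 : w.length = 2 * (n - 1) + 1 := by omega
        have hle : n - 1 ≤ w.length := by omega
        constructor
        · rintro ⟨hl, hnob⟩
          exact ⟨hw, (insert_bord_even a h1).mp (fun k hk hk2 => hnob k hk (by omega))⟩
        · rintro ⟨-, hbf⟩
          refine ⟨by rw [insert_length a hle]; omega, ?_⟩
          intro k hk hk2
          exact ((insert_bord_even a h1).mpr hbf) k hk (by omega)
      omega
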